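/- arXiv:2512.23274 — 2 statements merged into one kernel-verified Lean document; each statement's English description precedes it below -/
import Mathlib

section
/- If F(θ|γ) = C(F¹(θ¹|γ),...,Fⁿ(θⁿ|γ)) where the copula C (with density c) does not depend on γ, and f, f^j denote the joint and marginal densities, then the vector field V with components V^j(θ|γ) = F^j_γ(θ^j|γ)/f^j(θ^j|γ) satisfies the continuity equation ∇_θ·(V(θ|γ)f(θ|γ)) = f_γ(θ|γ) at every interior point where all densities are positive and smooth. -/
/-- Under invariant dependencies (copula density `c` independent of `γ`),
the vector field `V^j(θ|γ) = F^j_γ(θ^j|γ)/f^j(θ^j|γ)` satisfies the continuity equation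
`∇_θ · (V(θ|γ) f(θ|γ)) = f_γ(θ|γ)` pointwise wherever densities are positive and smooth. -/
theorem stmt0 (n : ℕ)
    -- marginal CDFs `F j x γ`, marginal densities `f j x γ`, γ-partials `Fγ j x γ`
    (F f Fγ : Fin n → ℝ → ℝ → ℝ)
    -- copula density, independent of γ
    (c : (Fin n → ℝ) → ℝ)
    -- joint density and its γ-partial
    (fjoint fjointγ : (Fin n → ℝ) → ℝ → ℝ)
    -- smoothness: each marginal CDF is C² jointly, copula density is C¹
    (hFsmooth : ∀ j, ContDiff ℝ 2 (fun p : ℝ × ℝ => F j p.1 p.2))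
    (hcsmooth : ContDiff ℝ 1 c)
    -- `f j` is the θ-partial of `F j`, `Fγ j` its γ-partial
    (hf : ∀ j x γ, HasDerivAt (fun y => F j y γ) (f j x γ) x)
    (hFγ : ∀ j x γ, HasDerivAt (fun g => F j x g) (Fγ j x γ) γ)
    -- invariant dependencies: the joint density has the copula form with `c` constant in γ
    (hjoint : ∀ θ γ, fjoint θ γ = c (fun j => F j (θ j) γ) * ∏ j, f j (θ j) γ)
    -- `fjointγ` is the γ-partial of the joint density
    (hjointγ : ∀ θ γ, HasDerivAt (fun g => fjoint θ g) (fjointγ θ γ) γ)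
    -- the vector field `V`
    (V : Fin n → (Fin n → ℝ) → ℝ → ℝ)
    (hV : ∀ j θ γ, V j θ γ = Fγ j (θ j) γ / f j (θ j) γ)
    -- a point where densities are positive
    (θ : Fin n → ℝ) (γ : ℝ)
    (hfpos : ∀ j x g, 0 < f j x g) (hcpos : ∀ u, 0 < c u)
    -- `D j` is the j-th partial derivative of `(V f)^j` in `θ^j` at the point
    (D : Fin n → ℝ)
    (hD : ∀ j, HasDerivAt
      (fun x => V j (Function.update θ j x) γ * fjoint (Function.update θ j x) γ)
      (D j) (θ j)) :
    -- continuity equation: divergence of `V f` equals `f_γ`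
    ∑ j, D j = fjointγ θ γ := by
  classical
  set w : Fin n → ℝ := fun k => F k (θ k) γ with hw
  set L : (Fin n → ℝ) →L[ℝ] ℝ := fderiv ℝ c w with hLdef
  have hcdiff : Differentiable ℝ c := hcsmooth.differentiable one_ne_zero
  -- mixed partial derivatives: a common value `M j` for both mixed second partials
  have key : ∀ j, ∃ M : ℝ, HasDerivAt (fun x => Fγ j x γ) M (θ j) ∧
      HasDerivAt (fun g => f j (θ j) g) M γ := by
    intro j
    set G : ℝ × ℝ → ℝ := fun p => F j p.1 p.2 with hG
    have hGc : ContDiff ℝ 2 G := hFsmooth j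
    have hGd : ∀ p, HasFDerivAt G (fderiv ℝ G p) p := fun p =>
      ((hGc.differentiable two_ne_zero) p).hasFDerivAt
    have hG1 : ContDiff ℝ 1 (fderiv ℝ G) := hGc.fderiv_right le_rfl
    have hG'd : ∀ p, HasFDerivAt (fderiv ℝ G) (fderiv ℝ (fderiv ℝ G) p) p := fun p =>
      ((hG1.differentiable one_ne_zero) p).hasFDerivAt
    set B : (ℝ × ℝ) →L[ℝ] (ℝ × ℝ) →L[ℝ] ℝ := fderiv ℝ (fderiv ℝ G) (θ j, γ) with hB
    have hsym : B (1, 0) (0, 1) = B (0, 1) (1, 0) :=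
      second_derivative_symmetric hGd (hG'd (θ j, γ)) _ _
    -- identify the first partials with f and Fγ
    have hfx : ∀ x g, fderiv ℝ G (x, g) (1, 0) = f j x g := by
      intro x g
      have h1 : HasDerivAt (fun x' : ℝ => (x', g)) ((1 : ℝ), (0 : ℝ)) x :=
        (hasDerivAt_id x).prodMk (hasDerivAt_const x g)
      have h2 := (hGd (x, g)).comp_hasDerivAt (f := fun x' : ℝ => (x', g)) x h1
      exact (h2.unique (hf j x g)).symm ▸ rfl
    have hgx : ∀ x g, fderiv ℝ G (x, g) (0, 1) = Fγ j x g := by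
      intro x g
      have h1 : HasDerivAt (fun g' : ℝ => (x, g')) ((0 : ℝ), (1 : ℝ)) g :=
        (hasDerivAt_const g x).prodMk (hasDerivAt_id g)
      have h2 := (hGd (x, g)).comp_hasDerivAt (f := fun g' : ℝ => (x, g')) g h1
      exact h2.unique (hFγ j x g)
    refine ⟨B (1, 0) (0, 1), ?_, ?_⟩
    · have h1 : HasDerivAt (fun x : ℝ => (x, γ)) ((1 : ℝ), (0 : ℝ)) (θ j) :=
        (hasDerivAt_id (θ j)).prodMk (hasDerivAt_const (θ j) γ)
      have h2 : HasDerivAt (fun x : ℝ => fderiv ℝ G (x, γ)) (B (1, 0)) (θ j) :=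
        (hG'd (θ j, γ)).comp_hasDerivAt (f := fun x : ℝ => (x, γ)) (θ j) h1
      have h3 := h2.clm_apply (hasDerivAt_const (θ j) ((0 : ℝ), (1 : ℝ)))
      have heq : (fun x : ℝ => fderiv ℝ G (x, γ) ((0 : ℝ), (1 : ℝ))) =
          fun x => Fγ j x γ := funext fun x => hgx x γ
      rw [heq] at h3
      simpa using h3
    · rw [hsym]
      have h1 : HasDerivAt (fun g : ℝ => (θ j, g)) ((0 : ℝ), (1 : ℝ)) γ :=
        (hasDerivAt_const γ (θ j)).prodMk (hasDerivAt_id γ)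
      have h2 : HasDerivAt (fun g : ℝ => fderiv ℝ G (θ j, g)) (B (0, 1)) γ :=
        (hG'd (θ j, γ)).comp_hasDerivAt (f := fun g : ℝ => (θ j, g)) γ h1
      have h3 := h2.clm_apply (hasDerivAt_const γ ((1 : ℝ), (0 : ℝ)))
      have heq : (fun g : ℝ => fderiv ℝ G (θ j, g) ((1 : ℝ), (0 : ℝ))) =
          fun g => f j (θ j) g := funext fun g => hfx (θ j) g
      rw [heq] at h3
      simpa using h3
  choose M hM hN using key
  -- notation for products with one factor removed
  set P : Fin n → ℝ := fun j => ∏ k ∈ Finset.univ.erase j, f k (θ k) γ with hP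
  -- the function in hD in explicit copula form
  have hfun : ∀ (j : Fin n) (x : ℝ),
      V j (Function.update θ j x) γ * fjoint (Function.update θ j x) γ =
      c (fun k => F k (Function.update θ j x k) γ) * (Fγ j x γ * P j) := by
    intro j x
    rw [hV, hjoint]
    have hprod : ∏ k, f k (Function.update θ j x k) γ = f j x γ * P j := by
      rw [← Finset.mul_prod_erase _ _ (Finset.mem_univ j), Function.update_self]
      congr 1
      exact Finset.prod_congr rfl fun k hk => by
        rw [Function.update_of_ne (Finset.ne_of_mem_erase hk)]
    rw [hprod, Function.update_self]
    have hne := (hfpos j x γ).ne'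
    field_simp
  -- derivative of the copula factor along coordinate j
  have hψd : ∀ j : Fin n, HasDerivAt (fun x => (fun k => F k (Function.update θ j x k) γ))
      (Pi.single j (f j (θ j) γ)) (θ j) := by
    intro j
    rw [hasDerivAt_pi]
    intro k
    by_cases hk : k = j
    · subst hk
      have : (fun x : ℝ => F k (Function.update θ k x k) γ) = fun x => F k x γ := by
        funext x; rw [Function.update_self]
      rw [this, Pi.single_eq_same]
      exact hf k (θ k) γ
    · have : (fun x : ℝ => F k (Function.update θ j x k) γ) = fun _ => F k (θ k) γ := by
        funext x; rw [Function.update_of_ne hk]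
      rw [this, Pi.single_eq_of_ne hk]
      exact hasDerivAt_const _ _
  have hψθ : ∀ j : Fin n, (fun k => F k (Function.update θ j (θ j) k) γ) = w := by
    intro j; funext k; rw [Function.update_eq_self]
  have hcj : ∀ j : Fin n, HasDerivAt (fun x => c (fun k => F k (Function.update θ j x k) γ))
      (L (Pi.single j (f j (θ j) γ))) (θ j) := by
    intro j
    have h := (hcdiff w).hasFDerivAt.comp_hasDerivAt_of_eq (θ j) (hψd j) (hψθ j).symm
    exact h
  -- compute D j
  have hDval : ∀ j : Fin n, D j =
      L (Pi.single j (f j (θ j) γ)) * (Fγ j (θ j) γ * P j) + c w * (M j * P j) := by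
    intro j
    have h1 : HasDerivAt (fun x => Fγ j x γ * P j) (M j * P j) (θ j) := (hM j).mul_const _
    have h2 := (hcj j).fun_mul h1
    have heq : (fun x => c (fun k => F k (Function.update θ j x k) γ) * (Fγ j x γ * P j)) =
        fun x => V j (Function.update θ j x) γ * fjoint (Function.update θ j x) γ :=
      funext fun x => (hfun j x).symm
    rw [heq] at h2
    have := (hD j).unique h2
    rw [this, hψθ j]
  -- compute fjointγ θ γ
  have hfγval : fjointγ θ γ =
      L (fun k => Fγ k (θ k) γ) * (∏ k, f k (θ k) γ) +
        c w * ∑ k, P k * M k := by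
    have hu : HasDerivAt (fun g => (fun k => F k (θ k) g)) (fun k => Fγ k (θ k) γ) γ :=
      hasDerivAt_pi.2 fun k => hFγ k (θ k) γ
    have hc1 : HasDerivAt (fun g => c (fun k => F k (θ k) g)) (L (fun k => Fγ k (θ k) γ)) γ :=
      (hcdiff w).hasFDerivAt.comp_hasDerivAt_of_eq γ hu rfl
    have hp : HasDerivAt (fun g => ∏ k, f k (θ k) g)
        (∑ k, (∏ l ∈ Finset.univ.erase k, f l (θ l) γ) • M k) γ :=
      HasDerivAt.fun_finsetProd fun k _ => hN k
    have h2 := hc1.fun_mul hp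
    have heq : (fun g => c (fun k => F k (θ k) g) * ∏ k, f k (θ k) g) =
        fun g => fjoint θ g := funext fun g => (hjoint θ g).symm
    rw [heq] at h2
    have := (hjointγ θ γ).unique h2
    rw [this]
    simp only [smul_eq_mul, hP, hw]
  -- final algebra
  have hsingle : ∀ (j : Fin n) (a : ℝ), L (Pi.single j a) = a * L (Pi.single j 1) := by
    intro j a
    have h1 : Pi.single j a = a • (Pi.single j 1 : Fin n → ℝ) := by
      funext k
      by_cases hk : k = j
      · subst hk; simp
      · simp [Pi.single_eq_of_ne hk]
    rw [h1, map_smul, smul_eq_mul]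
  have hLsum : L (fun k => Fγ k (θ k) γ) = ∑ j, Fγ j (θ j) γ * L (Pi.single j 1) := by
    have : (fun k => Fγ k (θ k) γ) = ∑ j, Pi.single j (Fγ j (θ j) γ) := by
      rw [Finset.univ_sum_single (fun k => Fγ k (θ k) γ)]
    rw [this, map_sum]
    exact Finset.sum_congr rfl fun j _ => hsingle j _
  have hfP : ∀ j : Fin n, f j (θ j) γ * P j = ∏ k, f k (θ k) γ := by
    intro j
    rw [hP]
    exact Finset.mul_prod_erase Finset.univ (fun k => f k (θ k) γ) (Finset.mem_univ j)
  calc ∑ j, D j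
      = ∑ j, (L (Pi.single j (f j (θ j) γ)) * (Fγ j (θ j) γ * P j) + c w * (M j * P j)) :=
        Finset.sum_congr rfl fun j _ => hDval j
    _ = ∑ j, (Fγ j (θ j) γ * L (Pi.single j 1) * (∏ k, f k (θ k) γ)) +
          ∑ j, c w * (P j * M j) := by
        rw [← Finset.sum_add_distrib]
        refine Finset.sum_congr rfl fun j _ => ?_
        rw [hsingle j, ← hfP j]
        ring
    _ = L (fun k => Fγ k (θ k) γ) * (∏ k, f k (θ k) γ) + c w * ∑ k, P k * M k := by
        rw [hLsum, Finset.sum_mul, ← Finset.mul_sum]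
    _ = fjointγ θ γ := hfγval.symm
end

section
/- Given the transfer formula t₁(γ) = ∫_Θ u(γ,θ) f(θ|γ)dθ − ∫_{γ̲}^γ ∫_Θ u(γ',θ) f_γ(θ|γ') dθ dγ' and t₂(γ,θ) = θ·∇_θ u(γ,θ) − u(γ,θ), the monopolist's expected revenue E_γ[t₁(γ)] + E_{γ,θ}[t₂(γ,θ)] equals E_{γ,θ}[ θ·∇_θ u(γ,θ) − u(γ,θ) · (f_γ(θ|γ)/f(θ|γ)) · ((1−G(γ))/g(γ)) ], where expectations are taken under γ ∼ G (density g > 0 on [γ̲,γ̄]) and θ|γ ∼ f(·|γ). -/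
open MeasureTheory

/-- Given the transfer formulas
`t₁(γ) = ∫ u f dθ − ∫_{γ̲}^γ ∫ u f_γ dθ dγ'` and `t₂(γ,θ) = θ·∇_θ u − u`, the monopolist's
expected revenue `E_γ[t₁] + E_{γ,θ}[t₂]` equals
`E_{γ,θ}[ θ·∇_θ u − u · (f_γ/f) · ((1−G)/g) ]`. -/
theorem stmt6 (n : ℕ) (lo hi : Fin n → ℝ) (glo ghi : ℝ) (hg : glo ≤ ghi)
    (u : ℝ → (Fin n → ℝ) → ℝ)
    (gradu : ℝ → (Fin n → ℝ) → Fin n → ℝ)    -- ∇_θ u (a.e. gradient of the convex u(γ,·))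
    (f fγ : (Fin n → ℝ) → ℝ → ℝ)
    (G g : ℝ → ℝ)
    (t₁ : ℝ → ℝ) (t₂ : ℝ → (Fin n → ℝ) → ℝ)
    -- continuity (hence integrability on the compact domains)
    (huc : Continuous (fun p : ℝ × (Fin n → ℝ) => u p.1 p.2))
    (hgraduc : Continuous (fun p : ℝ × (Fin n → ℝ) => gradu p.1 p.2))
    (hfc : Continuous (fun p : (Fin n → ℝ) × ℝ => f p.1 p.2))
    (hfγc : Continuous (fun p : (Fin n → ℝ) × ℝ => fγ p.1 p.2))
    (hgc : Continuous g)
    -- `u(γ,·)` convex and 1-Lipschitz with a.e. gradient `gradu`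
    (hconv : ∀ γ, ConvexOn ℝ (Set.Icc lo hi) (u γ))
    (hlip : ∀ γ, LipschitzWith 1 (u γ))
    (hgrad : ∀ γ, ∀ᵐ θ ∂(volume.restrict (Set.Icc lo hi)),
        ∀ j, HasDerivAt (fun x => u γ (Function.update θ j x)) (gradu γ θ j) (θ j))
    -- densities: positivity, `fγ` is the γ-partial of `f`, `G` the CDF of `g`, `G(γ̄)=1`
    (hfpos : ∀ θ γ, 0 < f θ γ) (hgpos : ∀ γ, γ ∈ Set.Icc glo ghi → 0 < g γ)
    (hfd : ∀ θ γ, HasDerivAt (fun s => f θ s) (fγ θ γ) γ)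
    (hfdens : ∀ γ, ∫ θ in Set.Icc lo hi, f θ γ = 1)
    (hG : ∀ γ, G γ = ∫ s in glo..γ, g s) (hG1 : G ghi = 1)
    -- the transfer formulas
    (ht₁ : ∀ γ, t₁ γ = (∫ θ in Set.Icc lo hi, u γ θ * f θ γ)
        - ∫ γ' in glo..γ, ∫ θ in Set.Icc lo hi, u γ' θ * fγ θ γ')
    (ht₂ : ∀ γ θ, t₂ γ θ = (∑ j, θ j * gradu γ θ j) - u γ θ) :
    -- expected revenue equals the virtual-surplus expression
    (∫ γ in glo..ghi, t₁ γ * g γ)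
      + (∫ γ in glo..ghi, (∫ θ in Set.Icc lo hi, t₂ γ θ * f θ γ) * g γ)
    = ∫ γ in glo..ghi,
        (∫ θ in Set.Icc lo hi,
          ((∑ j, θ j * gradu γ θ j)
            - u γ θ * (fγ θ γ / f θ γ) * ((1 - G γ) / g γ)) * f θ γ) * g γ := by
  classical
  set K := Set.Icc lo hi with hK
  have hKc : IsCompact K := isCompact_Icc
  -- abbreviations
  set S : ℝ → ℝ := fun γ => ∫ θ in K, (∑ j, θ j * gradu γ θ j) * f θ γ with hS
  set U : ℝ → ℝ := fun γ => ∫ θ in K, u γ θ * f θ γ with hU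
  set h : ℝ → ℝ := fun γ => ∫ θ in K, u γ θ * fγ θ γ with hh
  set H : ℝ → ℝ := fun γ => ∫ s in glo..γ, h s with hH
  -- continuity of inner integrands (as functions of the pair)
  have cS : Continuous (Function.uncurry fun γ (θ : Fin n → ℝ) =>
      (∑ j, θ j * gradu γ θ j) * f θ γ) := by
    apply Continuous.mul
    · exact continuous_finset_sum _ fun j _ =>
        ((continuous_apply j).comp continuous_snd).mul ((continuous_apply j).comp hgraduc)
    · exact hfc.comp (continuous_snd.prodMk continuous_fst)
  have cU : Continuous (Function.uncurry fun γ (θ : Fin n → ℝ) => u γ θ * f θ γ) :=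
    huc.mul (hfc.comp (continuous_snd.prodMk continuous_fst))
  have ch : Continuous (Function.uncurry fun γ (θ : Fin n → ℝ) => u γ θ * fγ θ γ) :=
    huc.mul (hfγc.comp (continuous_snd.prodMk continuous_fst))
  -- continuity of the parametric integrals
  have hScont : Continuous S := continuous_parametric_integral_of_continuous cS hKc
  have hUcont : Continuous U := continuous_parametric_integral_of_continuous cU hKc
  have hhcont : Continuous h := continuous_parametric_integral_of_continuous ch hKc
  -- integrability over K for fixed γ
  have hSint : ∀ γ, IntegrableOn (fun θ => (∑ j, θ j * gradu γ θ j) * f θ γ) K := fun γ =>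
    ((cS.comp (Continuous.prodMk_right γ)).continuousOn).integrableOn_compact hKc
  have hUint : ∀ γ, IntegrableOn (fun θ => u γ θ * f θ γ) K := fun γ =>
    ((cU.comp (Continuous.prodMk_right γ)).continuousOn).integrableOn_compact hKc
  have hhint : ∀ γ, IntegrableOn (fun θ => u γ θ * fγ θ γ) K := fun γ =>
    ((ch.comp (Continuous.prodMk_right γ)).continuousOn).integrableOn_compact hKc
  -- FTC: derivatives of H and G
  have hHd : ∀ x : ℝ, HasDerivAt H (h x) x := fun x =>
    intervalIntegral.integral_hasDerivAt_right (hhcont.intervalIntegrable _ _)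
      (hhcont.stronglyMeasurableAtFilter _ _) hhcont.continuousAt
  have hHcont : Continuous H := continuous_iff_continuousAt.2 fun x => (hHd x).continuousAt
  have hGfun : G = fun y => ∫ s in glo..y, g s := funext hG
  have hGd : ∀ x : ℝ, HasDerivAt G (g x) x := fun x => by
    rw [hGfun]
    exact intervalIntegral.integral_hasDerivAt_right (hgc.intervalIntegrable _ _)
      (hgc.stronglyMeasurableAtFilter _ _) hgc.continuousAt
  have hGcont : Continuous G := continuous_iff_continuousAt.2 fun x => (hGd x).continuousAt
  have hG0 : G glo = 0 := by rw [hG, intervalIntegral.integral_same]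
  -- integration by parts : ∫ H g = H ghi - ∫ h G
  have parts : (∫ x in glo..ghi, H x * g x)
      = H ghi * G ghi - H glo * G glo - ∫ x in glo..ghi, h x * G x := by
    exact intervalIntegral.integral_mul_deriv_eq_deriv_mul (fun x _ => hHd x) (fun x _ => hGd x)
      (hhcont.intervalIntegrable _ _) (hgc.intervalIntegrable _ _)
  have hHglo : H glo = 0 := intervalIntegral.integral_same
  have parts' : (∫ x in glo..ghi, H x * g x)
      = (∫ x in glo..ghi, h x) - ∫ x in glo..ghi, h x * G x := by
    rw [parts, hG1, hHglo, hH]; ring_nf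
  -- split the t₁ integral
  have e1 : (∫ γ in glo..ghi, t₁ γ * g γ)
      = (∫ γ in glo..ghi, U γ * g γ) - ∫ γ in glo..ghi, H γ * g γ := by
    rw [← intervalIntegral.integral_sub (f := fun x => U x * g x) (g := fun x => H x * g x)
      ((hUcont.mul hgc).intervalIntegrable _ _)
      ((hHcont.mul hgc).intervalIntegrable _ _)]
    apply intervalIntegral.integral_congr
    intro x _
    simp only [ht₁, hU, hH, hh]
    ring
  -- split the t₂ integral
  have hB : ∀ γ, (∫ θ in K, t₂ γ θ * f θ γ) = S γ - U γ := by
    intro γ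
    have e : ∀ θ, t₂ γ θ * f θ γ
        = (∑ j, θ j * gradu γ θ j) * f θ γ - u γ θ * f θ γ := by
      intro θ; rw [ht₂]; ring
    simp_rw [e]
    exact integral_sub (hSint γ) (hUint γ)
  have e2 : (∫ γ in glo..ghi, (∫ θ in K, t₂ γ θ * f θ γ) * g γ)
      = (∫ γ in glo..ghi, S γ * g γ) - ∫ γ in glo..ghi, U γ * g γ := by
    rw [← intervalIntegral.integral_sub (f := fun x => S x * g x) (g := fun x => U x * g x)
      ((hScont.mul hgc).intervalIntegrable _ _)
      ((hUcont.mul hgc).intervalIntegrable _ _)]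
    apply intervalIntegral.integral_congr
    intro x _
    show (∫ θ in K, t₂ x θ * f θ x) * g x = S x * g x - U x * g x
    rw [hB x]; ring
  -- rewrite the RHS integrand
  have e3 : (∫ γ in glo..ghi,
        (∫ θ in K, ((∑ j, θ j * gradu γ θ j)
          - u γ θ * (fγ θ γ / f θ γ) * ((1 - G γ) / g γ)) * f θ γ) * g γ)
      = ∫ γ in glo..ghi, (S γ * g γ - (1 - G γ) * h γ) := by
    apply intervalIntegral.integral_congr
    intro x hx
    have hgx : g x ≠ 0 := by
      refine ne_of_gt (hgpos x ?_)
      rwa [Set.uIcc_of_le hg] at hx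
    have e : ∀ θ, ((∑ j, θ j * gradu x θ j)
          - u x θ * (fγ θ x / f θ x) * ((1 - G x) / g x)) * f θ x
        = (∑ j, θ j * gradu x θ j) * f θ x - ((1 - G x) / g x) * (u x θ * fγ θ x) := by
      intro θ
      field_simp [(hfpos θ x).ne']
    show (∫ θ in K, _) * g x = _
    have hinner : (∫ θ in K, ((∑ j, θ j * gradu x θ j)
          - u x θ * (fγ θ x / f θ x) * ((1 - G x) / g x)) * f θ x)
        = S x - ((1 - G x) / g x) * h x := by
      simp_rw [e]
      rw [integral_sub (hSint x) ((hhint x).const_mul _), MeasureTheory.integral_const_mul]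
    rw [hinner]
    field_simp
  -- split the RHS
  have e4 : (∫ γ in glo..ghi, (S γ * g γ - (1 - G γ) * h γ))
      = (∫ γ in glo..ghi, S γ * g γ)
        - ((∫ γ in glo..ghi, h γ) - ∫ γ in glo..ghi, h γ * G γ) := by
    rw [intervalIntegral.integral_sub (f := fun x => S x * g x) (g := fun x => (1 - G x) * h x)
      ((hScont.mul hgc).intervalIntegrable _ _)
      (((continuous_const.sub hGcont).mul hhcont).intervalIntegrable _ _)]
    congr 1
    rw [← intervalIntegral.integral_sub (f := h) (g := fun x => h x * G x)
      (hhcont.intervalIntegrable _ _)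
      ((hhcont.mul hGcont).intervalIntegrable _ _)]
    apply intervalIntegral.integral_congr
    intro x _
    ring
  rw [e1, e2, e3, e4, parts']
  ring
end
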